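/- Let n ≥ 2 and let σ_1, …, σ_{n−1} ∈ S_n be the adjacent transpositions σ_i = (i, i+1). Call a word (i_1, …, i_ℓ) in {1,…,n−1} reduced for a permutation w if σ_{i_1} σ_{i_2} ⋯ σ_{i_ℓ} = w and no product of fewer than ℓ adjacent transpositions equals w. Then a permutation w ∈ S_n has exactly one reduced word if and only if w is the identity, or there exist 1 ≤ i ≤ k ≤ n−1 with w = σ_i σ_{i+1} ⋯ σ_k, or there exist 1 ≤ k ≤ i ≤ n−1 with w = σ_i σ_{i−1} ⋯ σ_k. -/

import Mathlib

/-- The adjacent transposition `σ_i = (i, i+1)` (1-based) in `S_n`,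
defined to be `1` when `i` is out of range. -/
def sigma (n : ℕ) (i : ℕ) : Equiv.Perm (Fin n) :=
  if h : 1 ≤ i ∧ i < n then Equiv.swap (⟨i - 1, by omega⟩ : Fin n) ⟨i, h.2⟩ else 1

/-- A word in the letters `{1, …, n-1}`. -/
def IsWord (n : ℕ) (L : List ℕ) : Prop := ∀ x ∈ L, 1 ≤ x ∧ x ≤ n - 1

/-- `L = (i_1, …, i_ℓ)` is a reduced word for `w` : the product
`σ_{i_1} σ_{i_2} ⋯ σ_{i_ℓ}` equals `w` and no product of fewer adjacent
transpositions equals `w`. -/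
def IsReducedWord (n : ℕ) (w : Equiv.Perm (Fin n)) (L : List ℕ) : Prop :=
  IsWord n L ∧ (L.map (sigma n)).prod = w ∧
  ∀ L' : List ℕ, IsWord n L' → (L'.map (sigma n)).prod = w → L.length ≤ L'.length

namespace Stmt10Aux

/-! ### Basic facts about `sigma` -/

lemma sigma_eq (n j : ℕ) (h1 : 1 ≤ j) (h2 : j < n) :
    sigma n j = Equiv.swap (⟨j - 1, by omega⟩ : Fin n) ⟨j, h2⟩ := by
  rw [sigma, dif_pos ⟨h1, h2⟩]

lemma sigma_mul_self (n j : ℕ) : sigma n j * sigma n j = 1 := by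
  rw [sigma]; split_ifs with h
  · exact Equiv.swap_mul_self _ _
  · exact one_mul 1

lemma sigma_inv (n j : ℕ) : (sigma n j)⁻¹ = sigma n j := by
  rw [sigma]; split_ifs with h
  · exact Equiv.swap_inv _ _
  · rfl

lemma sigma_apply_val (n j : ℕ) (h1 : 1 ≤ j) (h2 : j < n) (x : Fin n) :
    ((sigma n j x : Fin n) : ℕ) =
      if (x : ℕ) = j - 1 then j else if (x : ℕ) = j then j - 1 else (x : ℕ) := by
  rw [sigma_eq n j h1 h2, Equiv.swap_apply_def]
  split_ifs with a b c d e <;> simp only [Fin.ext_iff] at * <;> omega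

/-! ### Inversions -/

def invSet (n : ℕ) (w : Equiv.Perm (Fin n)) : Finset (Fin n × Fin n) :=
  Finset.univ.filter fun p => p.1 < p.2 ∧ w p.2 < w p.1

def inv (n : ℕ) (w : Equiv.Perm (Fin n)) : ℕ := (invSet n w).card

lemma mem_invSet {n : ℕ} {w : Equiv.Perm (Fin n)} {p : Fin n × Fin n} :
    p ∈ invSet n w ↔ p.1 < p.2 ∧ w p.2 < w p.1 := by simp [invSet]

lemma swap_lt_iff {n : ℕ} (x y p q : Fin n) (hxy : (x : ℕ) + 1 = y)
    (h1 : ¬(p = x ∧ q = y)) (h2 : ¬(p = y ∧ q = x)) :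
    Equiv.swap x y q < Equiv.swap x y p ↔ q < p := by
  simp only [Fin.ext_iff, not_and] at h1 h2
  simp only [Equiv.swap_apply_def, Fin.lt_def]
  split_ifs <;> (simp only [Fin.ext_iff] at *) <;> omega

lemma subset_A {n : ℕ} (x y : Fin n) (hxy : (x : ℕ) + 1 = y) (v : Equiv.Perm (Fin n)) :
    invSet n (Equiv.swap x y * v) ⊆
      insert (if v⁻¹ x < v⁻¹ y then (v⁻¹ x, v⁻¹ y) else (v⁻¹ y, v⁻¹ x)) (invSet n v) := by
  intro p hp
  rw [mem_invSet] at hp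
  obtain ⟨hlt, hinv⟩ := hp
  simp only [Equiv.Perm.mul_apply] at hinv
  by_cases hc1 : v p.1 = x ∧ v p.2 = y
  · have e1 : p.1 = v⁻¹ x := by rw [← hc1.1]; simp
    have e2 : p.2 = v⁻¹ y := by rw [← hc1.2]; simp
    have : v⁻¹ x < v⁻¹ y := by rw [← e1, ← e2]; exact hlt
    rw [if_pos this]
    exact Finset.mem_insert.2 (Or.inl (Prod.ext e1 e2))
  · by_cases hc2 : v p.1 = y ∧ v p.2 = x
    · have e1 : p.1 = v⁻¹ y := by rw [← hc2.1]; simp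
      have e2 : p.2 = v⁻¹ x := by rw [← hc2.2]; simp
      have : ¬ (v⁻¹ x < v⁻¹ y) := by rw [← e1, ← e2]; exact not_lt.2 hlt.le
      rw [if_neg this]
      exact Finset.mem_insert.2 (Or.inl (Prod.ext e1 e2))
    · apply Finset.mem_insert.2
      refine Or.inr (mem_invSet.2 ⟨hlt, ?_⟩)
      exact (swap_lt_iff x y (v p.1) (v p.2) hxy hc1 hc2).1 hinv

lemma subset_B {n : ℕ} (x y : Fin n) (hxy : (x : ℕ) + 1 = y) (v : Equiv.Perm (Fin n))
    (hd : v⁻¹ x < v⁻¹ y) :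
    insert (v⁻¹ x, v⁻¹ y) (invSet n v) ⊆ invSet n (Equiv.swap x y * v) := by
  have hxly : x < y := by rw [Fin.lt_def]; omega
  intro p hp
  rcases Finset.mem_insert.1 hp with h | h
  · subst h
    refine mem_invSet.2 ⟨hd, ?_⟩
    simp only [Equiv.Perm.mul_apply, Equiv.Perm.coe_inv, Equiv.apply_symm_apply]
    rw [Equiv.swap_apply_left, Equiv.swap_apply_right]
    exact hxly
  · rw [mem_invSet] at h
    obtain ⟨hlt, hinv⟩ := h
    refine mem_invSet.2 ⟨hlt, ?_⟩
    simp only [Equiv.Perm.mul_apply]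
    have hc1 : ¬ (v p.1 = x ∧ v p.2 = y) := by
      rintro ⟨e1, e2⟩; rw [e1, e2] at hinv; exact absurd hinv (not_lt.2 hxly.le)
    have hc2 : ¬ (v p.1 = y ∧ v p.2 = x) := by
      rintro ⟨e1, e2⟩
      have : p.1 = v⁻¹ y := by rw [← e1]; simp
      have h2 : p.2 = v⁻¹ x := by rw [← e2]; simp
      rw [this, h2] at hlt
      exact absurd (hd.trans hlt) (lt_irrefl _)
    exact (swap_lt_iff x y (v p.1) (v p.2) hxy hc1 hc2).2 hinv

lemma inv_swap_mul_le {n : ℕ} (x y : Fin n) (hxy : (x : ℕ) + 1 = y) (v : Equiv.Perm (Fin n)) :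
    inv n (Equiv.swap x y * v) ≤ inv n v + 1 :=
  (Finset.card_le_card (subset_A x y hxy v)).trans (Finset.card_insert_le _ _)

lemma inv_lt_inv_swap_mul {n : ℕ} (x y : Fin n) (hxy : (x : ℕ) + 1 = y)
    (v : Equiv.Perm (Fin n)) (hd : v⁻¹ x < v⁻¹ y) :
    inv n v < inv n (Equiv.swap x y * v) := by
  have hnm : (v⁻¹ x, v⁻¹ y) ∉ invSet n v := by
    rw [mem_invSet]
    rintro ⟨-, hinv⟩
    simp only [Equiv.Perm.coe_inv, Equiv.apply_symm_apply] at hinv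
    rw [Fin.lt_def] at hinv
    omega
  calc inv n v < (insert (v⁻¹ x, v⁻¹ y) (invSet n v)).card := by
        rw [Finset.card_insert_of_notMem hnm, inv]; omega
    _ ≤ _ := Finset.card_le_card (subset_B x y hxy v hd)

lemma inv_sigma_mul_le {n : ℕ} (j : ℕ) (h1 : 1 ≤ j) (h2 : j < n) (v : Equiv.Perm (Fin n)) :
    inv n (sigma n j * v) ≤ inv n v + 1 := by
  rw [sigma_eq n j h1 h2]
  exact inv_swap_mul_le _ _ (by simp; omega) v

lemma inv_prod_le {n : ℕ} (L : List ℕ) (hL : IsWord n L) :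
    inv n ((L.map (sigma n)).prod) ≤ L.length := by
  induction L with
  | nil =>
    simp only [List.map_nil, List.prod_nil, List.length_nil, Nat.le_zero, inv,
      Finset.card_eq_zero]
    ext p
    simp only [mem_invSet, Equiv.Perm.one_apply, Finset.notMem_empty, iff_false]
    rintro ⟨a, b⟩
    exact absurd (a.trans b) (lt_irrefl _)
  | cons j T ih =>
    have hj := hL j (List.mem_cons_self)
    have hT : IsWord n T := fun x hx => hL x (List.mem_cons_of_mem _ hx)
    rw [List.map_cons, List.prod_cons, List.length_cons]
    calc inv n (sigma n j * (T.map (sigma n)).prod)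
        ≤ inv n ((T.map (sigma n)).prod) + 1 :=
          inv_sigma_mul_le j hj.1 (by omega) _
      _ ≤ T.length + 1 := by have := ih hT; omega

/-- If `inv (σ_j * v) < inv v` then `v⁻¹ ⟨j⟩ < v⁻¹ ⟨j-1⟩`. -/
lemma descent_of_inv_lt {n : ℕ} (j : ℕ) (h1 : 1 ≤ j) (h2 : j < n) (v : Equiv.Perm (Fin n))
    (h : inv n (sigma n j * v) < inv n v) :
    (v⁻¹ (⟨j, h2⟩ : Fin n) : Fin n) < v⁻¹ (⟨j - 1, by omega⟩ : Fin n) := by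
  set x : Fin n := ⟨j - 1, by omega⟩
  set y : Fin n := ⟨j, h2⟩
  have hxy : (x : ℕ) + 1 = y := by simp [x, y]; omega
  rcases lt_trichotomy (v⁻¹ x) (v⁻¹ y) with hlt | heq | hgt
  · exfalso
    have := inv_lt_inv_swap_mul x y hxy v hlt
    rw [← sigma_eq n j h1 h2] at this
    omega
  · exfalso
    have : x = y := by
      have := congrArg v heq
      simpa using this
    rw [Fin.ext_iff] at this
    simp [x, y] at this
    omega
  · exact hgt

/-! ### The increasing runs -/

def cp (n i k : ℕ) : Equiv.Perm (Fin n) := ((List.range' i (k + 1 - i)).map (sigma n)).prod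

lemma cp_succ {n i k : ℕ} (h : i ≤ k) : cp n i k = sigma n i * cp n (i+1) k := by
  unfold cp
  have : k + 1 - i = (k + 1 - (i+1)) + 1 := by omega
  rw [this, List.range'_succ, List.map_cons, List.prod_cons]

lemma cp_apply_val (n : ℕ) : ∀ (m i k : ℕ), 1 ≤ i → i + m = k → k ≤ n - 1 →
    ∀ x : Fin n, ((cp n i k x : Fin n) : ℕ) =
      if (x : ℕ) = k then i - 1
      else if i - 1 ≤ (x : ℕ) ∧ (x : ℕ) < k then (x : ℕ) + 1 else (x : ℕ) := by
  intro m
  induction m with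
  | zero =>
    intro i k h1 hik hk x
    have hxn := x.isLt
    have hkn : k < n := by omega
    subst hik
    simp only [Nat.add_zero] at *
    have : cp n i i = sigma n i := by
      unfold cp
      have : i + 1 - i = 1 := by omega
      rw [this, List.range'_one, List.map_singleton, List.prod_singleton]
    rw [this, sigma_apply_val n i h1 (by omega)]
    split_ifs <;> omega
  | succ m ih =>
    intro i k h1 hik hk x
    have hxn := x.isLt
    have hkn : k < n := by omega
    rw [cp_succ (by omega), Equiv.Perm.mul_apply,
      sigma_apply_val n i h1 (by omega)]
    have hz := ih (i+1) k (by omega) (by omega) hk x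
    split_ifs at hz ⊢ <;> omega

lemma inv_cp (n i k : ℕ) (h1 : 1 ≤ i) (hik : i ≤ k) (hk : k ≤ n - 1) (hn : 2 ≤ n) :
    inv n (cp n i k) = k + 1 - i := by
  have hkn : k < n := by omega
  set kF : Fin n := ⟨k, hkn⟩ with hkF
  set iF : Fin n := ⟨i - 1, by omega⟩ with hiF
  have hkv : (kF : ℕ) = k := rfl
  have hiv : (iF : ℕ) = i - 1 := rfl
  have key : ∀ p : Fin n × Fin n,
      (p.1 < p.2 ∧ cp n i k p.2 < cp n i k p.1) ↔
      (p.2 = kF ∧ i - 1 ≤ (p.1 : ℕ) ∧ (p.1 : ℕ) < k) := by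
    intro p
    have ha := cp_apply_val n (k - i) i k h1 (by omega) hk p.1
    have hb := cp_apply_val n (k - i) i k h1 (by omega) hk p.2
    rw [Fin.lt_def, Fin.lt_def]
    have h2n := p.2.isLt
    constructor
    · rintro ⟨u, v⟩
      rw [ha, hb] at v
      refine ⟨Fin.ext ?_, ?_, ?_⟩ <;> rw [hkv] at * <;> split_ifs at v <;> omega
    · rintro ⟨u, v1, v2⟩
      have hv : (p.2 : ℕ) = k := by rw [u]
      refine ⟨by omega, ?_⟩
      rw [ha, hb]
      split_ifs <;> omega
  have hset : invSet n (cp n i k) =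
      Finset.map ⟨fun a : Fin n => (a, kF), fun a b h => (Prod.mk.injEq _ _ _ _ ▸ h).1⟩
        (Finset.Ico iF kF) := by
    ext p
    rw [mem_invSet, key p, Finset.mem_map]
    constructor
    · rintro ⟨h2, hle, hlt⟩
      exact ⟨p.1, Finset.mem_Ico.2 ⟨by rw [Fin.le_def]; omega, by rw [Fin.lt_def]; omega⟩,
        by rw [← h2]; exact Prod.mk.eta⟩
    · rintro ⟨a, ha, rfl⟩
      rw [Finset.mem_Ico] at ha
      exact ⟨rfl, ha.1, ha.2⟩
  rw [inv, hset, Finset.card_map, Fin.card_Ico]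
  simp only [hiF, hkF]
  omega

lemma cp_ne_one (n i k : ℕ) (h1 : 1 ≤ i) (hik : i ≤ k) (hk : k ≤ n - 1) (hn : 2 ≤ n) :
    cp n i k ≠ 1 := by
  intro h
  have hkn : k < n := by omega
  have := cp_apply_val n (k - i) i k h1 (by omega) hk ⟨k, hkn⟩
  rw [h] at this
  simp at this
  omega

/-- The canonical increasing word is reduced. -/
lemma cp_reduced (n i k : ℕ) (h1 : 1 ≤ i) (hik : i ≤ k) (hk : k ≤ n - 1) (hn : 2 ≤ n) :
    IsReducedWord n (cp n i k) (List.range' i (k + 1 - i)) := by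
  refine ⟨?_, rfl, ?_⟩
  · intro x hx
    rw [List.mem_range'_1] at hx
    omega
  · intro L' hL' hprod
    have := inv_prod_le L' hL'
    rw [hprod, inv_cp n i k h1 hik hk hn] at this
    rw [List.length_range']
    omega

/-- Uniqueness of the reduced word for an increasing run. -/
lemma cp_unique (n : ℕ) (hn : 2 ≤ n) :
    ∀ (m i k : ℕ), 1 ≤ i → i + m = k + 1 → k ≤ n - 1 →
    ∀ L, IsReducedWord n (cp n i k) L → L = List.range' i (k + 1 - i) := by
  intro m
  induction m with
  | zero =>
    intro i k h1 him hk L hL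
    have hempty : k + 1 - i = 0 := by omega
    have hcp : cp n i k = 1 := by
      unfold cp; rw [hempty]; simp
    rw [hempty, List.range'_zero]
    have h0 := hL.2.2 [] (by intro x hx; simp at hx) (by simp [hcp])
    simp only [List.length_nil, Nat.le_zero] at h0
    exact List.length_eq_zero_iff.1 h0
  | succ m ih =>
    intro i k h1 him hk L hL
    rcases Nat.lt_or_ge k (i) with hik' | hik
    · -- i = k + 1 : empty word
      have hempty : k + 1 - i = 0 := by omega
      have hcp : cp n i k = 1 := by unfold cp; rw [hempty]; simp
      rw [hempty, List.range'_zero]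
      have h0 := hL.2.2 [] (by intro x hx; simp at hx) (by simp [hcp])
      simp only [List.length_nil, Nat.le_zero] at h0
      exact List.length_eq_zero_iff.1 h0
    · obtain ⟨hword, hprod, hmin⟩ := hL
      -- L has length at most k+1-i
      have hlen : L.length ≤ k + 1 - i := by
        have := hmin (List.range' i (k + 1 - i)) (cp_reduced n i k h1 hik hk hn).1
          (cp_reduced n i k h1 hik hk hn).2.1
        rw [List.length_range'] at this
        exact this
      -- L is nonempty
      cases L with
      | nil =>
        exfalso
        apply cp_ne_one n i k h1 hik hk hn
        rw [← hprod]; simp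
      | cons j T =>
        have hj := hword j (List.mem_cons_self)
        have hjn : j < n := by omega
        have hT : IsWord n T := fun x hx => hword x (List.mem_cons_of_mem _ hx)
        rw [List.map_cons, List.prod_cons] at hprod
        have hprodT : (T.map (sigma n)).prod = sigma n j * cp n i k := by
          rw [← hprod, ← mul_assoc, sigma_mul_self, one_mul]
        -- σ_j is a descent of cp
        have hinvT : inv n (sigma n j * cp n i k) < inv n (cp n i k) := by
          rw [← hprodT, inv_cp n i k h1 hik hk hn]
          have := inv_prod_le T hT
          have hTlen : T.length ≤ k - i := by
            have : (j :: T).length = T.length + 1 := rfl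
            omega
          omega
        have hdesc := descent_of_inv_lt j hj.1 hjn (cp n i k) hinvT
        -- identify j = i
        have hji : j = i := by
          set A := (cp n i k)⁻¹ (⟨j, hjn⟩ : Fin n)
          set B := (cp n i k)⁻¹ (⟨j - 1, by omega⟩ : Fin n)
          have hA : cp n i k A = ⟨j, hjn⟩ := Equiv.apply_symm_apply _ _
          have hB : cp n i k B = ⟨j - 1, by omega⟩ := Equiv.apply_symm_apply _ _
          have hAv : ((cp n i k A : Fin n) : ℕ) = j := by rw [hA]
          have hBv : ((cp n i k B : Fin n) : ℕ) = j - 1 := by rw [hB]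
          have hfa := cp_apply_val n (k - i) i k h1 (by omega) hk A
          have hfb := cp_apply_val n (k - i) i k h1 (by omega) hk B
          rw [hAv] at hfa
          rw [hBv] at hfb
          rw [Fin.lt_def] at hdesc
          have hAn := A.isLt
          have hBn := B.isLt
          split_ifs at hfa hfb <;> omega
        subst hji
        -- T is a reduced word for cp n (j+1) k
        have hprodT' : (T.map (sigma n)).prod = cp n (j+1) k := by
          rw [hprodT, cp_succ hik, ← mul_assoc, sigma_mul_self, one_mul]
        have hTred : IsReducedWord n (cp n (j+1) k) T := by
          refine ⟨hT, hprodT', ?_⟩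
          intro M hM hMprod
          have : ((j :: M).map (sigma n)).prod = cp n j k := by
            rw [List.map_cons, List.prod_cons, hMprod, ← cp_succ hik]
          have := hmin (j :: M) (by
            intro x hx
            rcases List.mem_cons.1 hx with rfl | hx
            · exact hj
            · exact hM x hx) this
          simp only [List.length_cons] at this
          omega
        have := ih (j+1) k (by omega) (by omega) hk T hTred
        rw [this]
        have : k + 1 - j = (k + 1 - (j+1)) + 1 := by omega
        rw [this, List.range'_succ]

/-! ### Reversal -/

lemma prod_reverse_map (n : ℕ) (L : List ℕ) :
    ((L.reverse).map (sigma n)).prod = ((L.map (sigma n)).prod)⁻¹ := by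
  induction L with
  | nil => simp
  | cons a T ih =>
    rw [List.reverse_cons, List.map_append, List.prod_append, ih, List.map_cons,
      List.prod_cons]
    simp [sigma_inv, mul_inv_rev]

lemma reduced_reverse {n : ℕ} {w : Equiv.Perm (Fin n)} {L : List ℕ}
    (h : IsReducedWord n w L) : IsReducedWord n w⁻¹ L.reverse := by
  obtain ⟨hword, hprod, hmin⟩ := h
  refine ⟨fun x hx => hword x (List.mem_reverse.1 hx), by rw [prod_reverse_map, hprod], ?_⟩
  intro M hM hMprod
  have : ((M.reverse).map (sigma n)).prod = w := by
    rw [prod_reverse_map, hMprod, inv_inv]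
  have := hmin M.reverse (fun x hx => hM x (List.mem_reverse.1 hx)) this
  simpa using this

/-! ### Commutation and braid relations -/

lemma sigma_comm {n : ℕ} {a b : ℕ} (ha1 : 1 ≤ a) (ha2 : a < n) (hb1 : 1 ≤ b) (hb2 : b < n)
    (hd : a + 1 < b ∨ b + 1 < a) :
    sigma n a * sigma n b = sigma n b * sigma n a := by
  rw [sigma_eq n a ha1 ha2, sigma_eq n b hb1 hb2]
  have hdisj : (Equiv.swap (⟨a - 1, by omega⟩ : Fin n) ⟨a, ha2⟩).Disjoint
      (Equiv.swap (⟨b - 1, by omega⟩ : Fin n) ⟨b, hb2⟩) := by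
    intro x
    rcases Nat.lt_or_ge (x : ℕ) (min a b - 1) with h | h
    · left
      apply Equiv.swap_apply_of_ne_of_ne <;> (rw [Ne, Fin.ext_iff]; simp; omega)
    · rcases Nat.lt_or_ge (x : ℕ) (max a b - 1) with h' | h'
      · -- x could be a-1 or a (if a < b) etc; x is not in the pair with larger indices
        rcases hd with hab | hba
        · right
          apply Equiv.swap_apply_of_ne_of_ne <;> (rw [Ne, Fin.ext_iff]; simp; omega)
        · left
          apply Equiv.swap_apply_of_ne_of_ne <;> (rw [Ne, Fin.ext_iff]; simp; omega)
      · rcases hd with hab | hba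
        · left
          apply Equiv.swap_apply_of_ne_of_ne <;> (rw [Ne, Fin.ext_iff]; simp; omega)
        · right
          apply Equiv.swap_apply_of_ne_of_ne <;> (rw [Ne, Fin.ext_iff]; simp; omega)
  exact hdisj.commute.eq

lemma sigma_braid {n : ℕ} {a b : ℕ} (ha1 : 1 ≤ a) (ha2 : a < n) (hb1 : 1 ≤ b) (hb2 : b < n)
    (hd : a + 1 = b ∨ b + 1 = a) :
    sigma n a * sigma n b * sigma n a = sigma n b * sigma n a * sigma n b := by
  -- WLOG a + 1 = b
  have main : ∀ (a b : ℕ) (ha1 : 1 ≤ a) (ha2 : a < n) (hb1 : 1 ≤ b) (hb2 : b < n),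
      a + 1 = b →
      sigma n a * sigma n b * sigma n a = sigma n b * sigma n a * sigma n b := by
    clear ha1 ha2 hb1 hb2 hd a b
    intro a b ha1 ha2 hb1 hb2 hab
    rw [sigma_eq n a ha1 ha2, sigma_eq n b hb1 hb2]
    set x : Fin n := ⟨a - 1, by omega⟩
    set y : Fin n := ⟨a, ha2⟩
    set z : Fin n := ⟨b, hb2⟩
    have hyb : (⟨b - 1, by omega⟩ : Fin n) = y := by rw [Fin.ext_iff]; simp [y]; omega
    rw [hyb]
    have hxy : x ≠ y := by rw [Ne, Fin.ext_iff]; simp [x, y]; omega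
    have hxz : x ≠ z := by rw [Ne, Fin.ext_iff]; simp [x, z]; omega
    have hyz : y ≠ z := by rw [Ne, Fin.ext_iff]; simp [y, z]; omega
    have e1 : Equiv.swap y z * Equiv.swap x y * Equiv.swap y z = Equiv.swap z x :=
      Equiv.swap_mul_swap_mul_swap hxy hxz
    have e2 : Equiv.swap x y * Equiv.swap y z * Equiv.swap x y = Equiv.swap z x := by
      rw [Equiv.swap_comm x y, Equiv.swap_comm y z]
      have := Equiv.swap_mul_swap_mul_swap (x := z) (y := y) (z := x) hyz.symm (Ne.symm hxz)
      rw [this, Equiv.swap_comm]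
    rw [e1, e2]
  rcases hd with hab | hba
  · exact main a b ha1 ha2 hb1 hb2 hab
  · exact (main b a hb1 hb2 ha1 ha2 hba).symm

/-! ### Structure of words with unit steps and no turns -/

lemma mono_structure : ∀ L : List ℕ,
    (∀ (A : List ℕ) (a b : ℕ) (B : List ℕ), L = A ++ a :: b :: B → a + 1 = b ∨ b + 1 = a) →
    (∀ (A : List ℕ) (a b : ℕ) (B : List ℕ), L = A ++ a :: b :: a :: B → False) →
    L = [] ∨ (∃ i m, 1 ≤ m ∧ L = List.range' i m) ∨
      (∃ i m, 1 ≤ m ∧ L = (List.range' i m).reverse) := by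
  intro L
  induction L with
  | nil => intro _ _; exact Or.inl rfl
  | cons a T ihT =>
    intro hstep hturn
    cases T with
    | nil =>
      refine Or.inr (Or.inl ⟨a, 1, le_refl 1, ?_⟩)
      simp
    | cons b T' =>
      have hab : a + 1 = b ∨ b + 1 = a := hstep [] a b T' rfl
      have hstep' : ∀ (A : List ℕ) (x y : ℕ) (B : List ℕ),
          b :: T' = A ++ x :: y :: B → x + 1 = y ∨ y + 1 = x := by
        intro A x y B h
        exact hstep (a :: A) x y B (by rw [List.cons_append, h])
      have hturn' : ∀ (A : List ℕ) (x y : ℕ) (B : List ℕ),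
          b :: T' = A ++ x :: y :: x :: B → False := by
        intro A x y B h
        exact hturn (a :: A) x y B (by rw [List.cons_append, h])
      rcases ihT hstep' hturn' with hnil | ⟨i, m, hm, hinc⟩ | ⟨i, m, hm, hdec⟩
      · exact absurd hnil (by simp)
      · -- b :: T' = range' i m, so i = b
        obtain ⟨hib, hm0, hT'⟩ := List.range'_eq_cons_iff.1 hinc.symm
        rcases hab with hab | hba
        · refine Or.inr (Or.inl ⟨a, m + 1, by omega, ?_⟩)
          rw [List.range'_succ, hab, hinc, hib]
        · -- a = b + 1 : decreasing step; then T' must be empty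
          cases hm1 : m - 1 with
          | zero =>
            have hT'e : T' = [] := by rw [hT', hm1]; simp
            refine Or.inr (Or.inr ⟨b, 2, by omega, ?_⟩)
            rw [hT'e]
            have : List.range' b 2 = [b, b+1] := rfl
            rw [this]
            simp [hba]
          | succ m' =>
            exfalso
            have hTT : T' = (b+1) :: List.range' (b+2) m' := by
              rw [hT', ← hib, hm1, List.range'_succ, hib]
            exact hturn [] a b (List.range' (b+2) m')
              (by rw [hTT, hba]; rfl)
      · -- b :: T' = (range' i m).reverse, head is i + m - 1
        cases hm1 : m - 1 with
        | zero =>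
          have hm1' : m = 1 := by omega
          have : b :: T' = [i] := by rw [hdec, hm1']; rfl
          have hib : b = i := by injection this with h1 _
          have hT'e : T' = [] := by injection this
          rcases hab with hab | hba
          · refine Or.inr (Or.inl ⟨a, 2, by omega, ?_⟩)
            rw [hT'e]
            have : List.range' a 2 = [a, a+1] := rfl
            rw [this, hab, hib]
          · refine Or.inr (Or.inr ⟨b, 2, by omega, ?_⟩)
            rw [hT'e]
            have : List.range' b 2 = [b, b+1] := rfl
            rw [this]
            simp [hba]
        | succ m' =>
          -- m ≥ 2
          have hm2 : m = m' + 2 := by omega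
          have hrev : (List.range' i m).reverse
              = (i + (m' + 1)) :: (i + m') :: (List.range' i m').reverse := by
            rw [hm2, List.range'_1_concat, List.range'_1_concat]
            simp
          have hdec' := hdec
          rw [hrev] at hdec'
          have hb1 : b = i + (m' + 1) := by injection hdec' with h1 _
          have hT' : T' = (i + m') :: (List.range' i m').reverse := by injection hdec'
          rcases hab with hab | hba
          · exfalso
            apply hturn [] a b ((List.range' i m').reverse)
            have haim : a = i + m' := by omega
            rw [hT', ← haim]
            simp
          · refine Or.inr (Or.inr ⟨i, m + 1, by omega, ?_⟩)
            have haim : a = i + m := by omega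
            rw [List.range'_1_concat]
            simp only [List.reverse_append, List.reverse_singleton, List.singleton_append]
            rw [← hdec, haim]

end Stmt10Aux

theorem stmt10 (n : ℕ) (hn : 2 ≤ n) (w : Equiv.Perm (Fin n)) :
    (∃! L : List ℕ, IsReducedWord n w L) ↔
      (w = 1 ∨
       (∃ i k, 1 ≤ i ∧ i ≤ k ∧ k ≤ n - 1 ∧
         w = ((List.range' i (k + 1 - i)).map (sigma n)).prod) ∨
       (∃ i k, 1 ≤ k ∧ k ≤ i ∧ i ≤ n - 1 ∧
         w = (((List.range' k (i + 1 - k)).reverse).map (sigma n)).prod)) := by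
  open Stmt10Aux in
  constructor
  · rintro ⟨L, hL, huniq⟩
    have hstep : ∀ (A : List ℕ) (a b : ℕ) (B : List ℕ), L = A ++ a :: b :: B →
        a + 1 = b ∨ b + 1 = a := by
      intro A a b B hAB
      by_contra hcon
      push_neg at hcon
      have ha : 1 ≤ a ∧ a ≤ n - 1 := hL.1 a (by rw [hAB]; simp)
      have hb : 1 ≤ b ∧ b ≤ n - 1 := hL.1 b (by rw [hAB]; simp)
      by_cases hab : a = b
      · subst hab
        have hword : IsWord n (A ++ B) := by
          intro x hx
          apply hL.1 x
          rw [hAB]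
          simp at hx ⊢
          tauto
        have hprod : ((A ++ B).map (sigma n)).prod = w := by
          rw [← hL.2.1, hAB]
          simp only [List.map_append, List.prod_append, List.map_cons, List.prod_cons]
          have : sigma n a * (sigma n a * (B.map (sigma n)).prod) = (B.map (sigma n)).prod := by
            rw [← mul_assoc, sigma_mul_self, one_mul]
          rw [this]
        have hle := hL.2.2 (A ++ B) hword hprod
        rw [hAB] at hle
        simp only [List.length_append, List.length_cons] at hle
        omega
      · have hdist : a + 1 < b ∨ b + 1 < a := by omega
        have hcomm := sigma_comm (n := n) ha.1 (by omega) hb.1 (by omega) hdist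
        have hword : IsWord n (A ++ b :: a :: B) := by
          intro x hx
          apply hL.1 x
          rw [hAB]
          simp at hx ⊢
          tauto
        have hprod : ((A ++ b :: a :: B).map (sigma n)).prod = w := by
          rw [← hL.2.1, hAB]
          simp only [List.map_append, List.prod_append, List.map_cons, List.prod_cons]
          have : sigma n b * (sigma n a * (B.map (sigma n)).prod)
              = sigma n a * (sigma n b * (B.map (sigma n)).prod) := by
            rw [← mul_assoc, ← mul_assoc, hcomm]
          rw [this]
        have hred : IsReducedWord n w (A ++ b :: a :: B) := by
          refine ⟨hword, hprod, ?_⟩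
          intro M hM hMp
          have := hL.2.2 M hM hMp
          rw [hAB] at this
          simp only [List.length_append, List.length_cons] at this ⊢
          omega
        have heq := huniq _ hred
        rw [hAB] at heq
        have h2 := List.append_cancel_left heq
        have h1 : b = a := by injection h2
        omega
    have hturn : ∀ (A : List ℕ) (a b : ℕ) (B : List ℕ), L = A ++ a :: b :: a :: B → False := by
      intro A a b B hAB
      have hab := hstep A a b (a :: B) hAB
      have ha : 1 ≤ a ∧ a ≤ n - 1 := hL.1 a (by rw [hAB]; simp)
      have hb : 1 ≤ b ∧ b ≤ n - 1 := hL.1 b (by rw [hAB]; simp)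
      have hbraid := sigma_braid (n := n) ha.1 (by omega) hb.1 (by omega) hab
      have hword : IsWord n (A ++ b :: a :: b :: B) := by
        intro x hx
        apply hL.1 x
        rw [hAB]
        simp at hx ⊢
        tauto
      have hprod : ((A ++ b :: a :: b :: B).map (sigma n)).prod = w := by
        rw [← hL.2.1, hAB]
        simp only [List.map_append, List.prod_append, List.map_cons, List.prod_cons]
        have : sigma n b * (sigma n a * (sigma n b * (B.map (sigma n)).prod))
            = sigma n a * (sigma n b * (sigma n a * (B.map (sigma n)).prod)) := by
          rw [← mul_assoc, ← mul_assoc, ← hbraid, mul_assoc, mul_assoc]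
        rw [this]
      have hred : IsReducedWord n w (A ++ b :: a :: b :: B) := by
        refine ⟨hword, hprod, ?_⟩
        intro M hM hMp
        have := hL.2.2 M hM hMp
        rw [hAB] at this
        simp only [List.length_append, List.length_cons] at this ⊢
        omega
      have heq := huniq _ hred
      rw [hAB] at heq
      have h2 := List.append_cancel_left heq
      have h1 : b = a := by injection h2
      omega
    rcases mono_structure L hstep hturn with h0 | ⟨i, m, hm, hLr⟩ | ⟨i, m, hm, hLr⟩
    · left
      rw [← hL.2.1, h0]
      simp
    · right; left
      have hiL : i ∈ L := by
        rw [hLr]; exact List.mem_range'_1.2 ⟨le_refl i, by omega⟩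
      have hkL : i + m - 1 ∈ L := by
        rw [hLr]; exact List.mem_range'_1.2 (by omega)
      have hi := hL.1 i hiL
      have hk := hL.1 (i + m - 1) hkL
      refine ⟨i, i + m - 1, hi.1, by omega, hk.2, ?_⟩
      have : i + m - 1 + 1 - i = m := by omega
      rw [this, ← hL.2.1, hLr]
    · right; right
      have hiL : i ∈ L := by
        rw [hLr, List.mem_reverse]; exact List.mem_range'_1.2 ⟨le_refl i, by omega⟩
      have hkL : i + m - 1 ∈ L := by
        rw [hLr, List.mem_reverse]; exact List.mem_range'_1.2 (by omega)
      have hi := hL.1 i hiL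
      have hk := hL.1 (i + m - 1) hkL
      refine ⟨i + m - 1, i, hi.1, by omega, hk.2, ?_⟩
      have : i + m - 1 + 1 - i = m := by omega
      rw [this, ← hL.2.1, hLr]
  · rintro (rfl | ⟨i, k, h1, hik, hk, rfl⟩ | ⟨i, k, hk1, hki, hin, rfl⟩)
    · refine ⟨[], ⟨fun x hx => absurd hx (List.not_mem_nil), by simp, fun M _ _ => by simp⟩, ?_⟩
      intro M hM
      have h0 := hM.2.2 [] (fun x hx => absurd hx (List.not_mem_nil)) (by simp)
      simp only [List.length_nil, Nat.le_zero] at h0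
      exact List.length_eq_zero_iff.1 h0
    · exact ⟨List.range' i (k + 1 - i), cp_reduced n i k h1 hik hk hn,
        fun M hM => cp_unique n hn (k + 1 - i) i k h1 (by omega) hk M hM⟩
    · have hw : (((List.range' k (i + 1 - k)).reverse).map (sigma n)).prod = (cp n k i)⁻¹ := by
        rw [prod_reverse_map]
        rfl
      refine ⟨(List.range' k (i + 1 - k)).reverse, ?_, ?_⟩
      · rw [hw]
        exact reduced_reverse (cp_reduced n k i hk1 hki hin hn)
      · intro M hM
        rw [hw] at hM
        have hrev := reduced_reverse hM
        rw [inv_inv] at hrev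
        have := cp_unique n hn (i + 1 - k) k i hk1 (by omega) hin M.reverse hrev
        rw [← List.reverse_reverse M, this]
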